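/- Let p ∈ (0,1) be fixed, and for each integer k ≥ 3 let p_R(k) ∈ (0,1) be the unique positive solution of (1 − px/(p + (1−p)x))^{k−1} = 1 − x. Then 1 − p_R(k) is asymptotically equivalent to (1−p)^{k−1} as k → ∞; i.e., (1 − p_R(k))/(1−p)^{k−1} → 1. -/

import Mathlib

open Real Filter

set_option maxHeartbeats 1600000 in
theorem stmt19 (p : ℝ) (hp : 0 < p) (hp1 : p < 1)
    (pR : ℕ → ℝ)
    (hpR : ∀ k, 3 ≤ k → pR k ∈ Set.Ioo (0:ℝ) 1 ∧
      (1 - p * pR k / (p + (1 - p) * pR k)) ^ (k - 1) = 1 - pR k) :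
    Tendsto (fun k => (1 - pR k) / (1 - p) ^ (k - 1)) atTop (nhds 1) := by
  set q : ℝ := 1 - p with hq_def
  have hq : 0 < q := by simp [hq_def]; linarith
  have hq1 : q < 1 := by simp [hq_def]; linarith
  clear_value q
  -- choose a uniform lower bound c₀ for pR k
  set c₀ : ℝ := min (1/2) (p^2 / (2 * q^2)) with hc₀_def
  have hc₀_pos : 0 < c₀ := lt_min (by norm_num) (by positivity)
  have hc₀_half : c₀ ≤ 1/2 := min_le_left _ _
  have hc₀_le : c₀ ≤ p^2 / (2 * q^2) := min_le_right _ _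
  clear_value c₀
  have hc₀_lt1 : c₀ < 1 := lt_of_le_of_lt hc₀_half (by norm_num)
  set ρ : ℝ := 1 - p * c₀ / (p + q * c₀) with hρ_def
  clear_value ρ
  have hden₀ : 0 < p + q * c₀ := add_pos hp (mul_pos hq hc₀_pos)
  have hρ_pos : 0 < ρ := by
    have : p * c₀ < p + q * c₀ := by nlinarith
    have := (div_lt_one hden₀).2 this
    simp only [hρ_def]; linarith
  have hρ_lt1 : ρ < 1 := by
    have : 0 < p * c₀ / (p + q * c₀) := div_pos (mul_pos hp hc₀_pos) hden₀
    simp only [hρ_def]; linarith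
  -- key per-k facts
  have key : ∀ k, 3 ≤ k → 1 ≤ (1 - pR k) / q ^ (k - 1) ∧
      (1 - pR k) / q ^ (k - 1) ≤ Real.exp ((k - 1 : ℕ) * ((p / q) * ρ ^ (k - 1))) := by
    intro k hk
    obtain ⟨⟨hx0, hx1⟩, heq⟩ := hpR k hk
    set x := pR k with hx_def
    clear_value x
    set den : ℝ := p + q * x with hden_def
    clear_value den
    have hden : 0 < den := by rw [hden_def]; exact add_pos hp (mul_pos hq hx0)
    set r : ℝ := 1 - p * x / den with hr_def
    clear_value r
    have heq' : r ^ (k - 1) = 1 - x := by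
      simpa [hr_def, hden_def, hq_def] using heq
    have hr_pos : 0 < r := by
      have : p * x < den := by simp only [hden_def]; nlinarith
      have := (div_lt_one hden).2 this
      simp only [hr_def]; linarith
    have hr_lt1 : r < 1 := by
      have : 0 < p * x / den := div_pos (mul_pos hp hx0) hden
      simp only [hr_def]; linarith
    -- r ≥ q, indeed r - q = p^2 (1-x) / den
    have h1x_pos : 0 < p ^ 2 * (1 - x) := mul_pos (pow_pos hp 2) (by linarith)
    have hrsub : r - q = p ^ 2 * (1 - x) / den := by
      rw [hr_def, hq_def, hden_def, hq_def]
      have h0 : p + (1 - p) * x > 0 := by nlinarith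
      rw [eq_div_iff h0.ne', sub_mul, sub_mul, div_mul_cancel₀ _ h0.ne']
      ring
    have hrq : q < r := by
      have hpos : 0 < p ^ 2 * (1 - x) / den := div_pos h1x_pos hden
      linarith [hrsub ▸ hpos]
    -- lower bound x ≥ c₀
    have hx_ge : c₀ ≤ x := by
      by_contra hcon
      push_neg at hcon
      have h2k : 2 ≤ k - 1 := by omega
      have hpow : r ^ (k - 1) ≤ r ^ 2 :=
        pow_le_pow_of_le_one hr_pos.le hr_lt1.le h2k
      have h1x : 1 - x ≤ r ^ 2 := heq' ▸ hpow
      -- multiply through by den^2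
      have h2 : (1 - x) * den ^ 2 ≤ (den - p * x) ^ 2 := by
        have hr2 : r = (den - p * x) / den := by
          simp only [hr_def]; field_simp
        rw [hr2, div_pow] at h1x
        calc (1 - x) * den ^ 2 ≤ ((den - p * x)^2 / den^2) * den^2 := by
              apply mul_le_mul_of_nonneg_right h1x (by positivity)
          _ = (den - p * x) ^ 2 := by field_simp
      -- deduce q^2 x^2 ≥ p^2 (1 - x)
      have h3 : p ^ 2 * (1 - x) ≤ q ^ 2 * x ^ 2 := by
        simp only [hden_def] at h2
        nlinarith [sq_nonneg (p + q * x), hx0, hden]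
      -- but x < c₀ gives contradiction
      have h4 : q ^ 2 * x ^ 2 < q ^ 2 * c₀ ^ 2 := by nlinarith [mul_pos (mul_pos hq hq) (mul_pos (show (0:ℝ) < c₀ + x by linarith) (show (0:ℝ) < c₀ - x by linarith))]
      have h5 : q ^ 2 * c₀ ^ 2 ≤ p ^ 2 * c₀ / 2 := by
        have : c₀ * q^2 * c₀ ≤ (p^2/(2*q^2)) * q^2 * c₀ := by
          apply mul_le_mul_of_nonneg_right (mul_le_mul_of_nonneg_right hc₀_le (by positivity)) hc₀_pos.le
        calc q^2 * c₀^2 = c₀ * q^2 * c₀ := by ring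
          _ ≤ (p^2/(2*q^2)) * q^2 * c₀ := this
          _ = p^2 * c₀ / 2 := by field_simp
      nlinarith
    -- r ≤ ρ
    have hrρ : r ≤ ρ := by
      have : p * c₀ / (p + q * c₀) ≤ p * x / den := by
        rw [div_le_div_iff₀ hden₀ hden]
        simp only [hden_def]
        nlinarith
      simp only [hr_def, hρ_def]; linarith
    have h1x_le : 1 - x ≤ ρ ^ (k - 1) := by
      rw [← heq']
      exact pow_le_pow_left₀ hr_pos.le hrρ _
    -- ratio = (r/q)^(k-1)
    have hratio : (1 - x) / q ^ (k - 1) = (r / q) ^ (k - 1) := by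
      rw [← heq', div_pow]
    constructor
    · rw [hratio]
      exact one_le_pow₀ ((one_le_div hq).2 hrq.le)
    · rw [hratio]
      have hub : r / q ≤ 1 + (p / q) * ρ ^ (k - 1) := by
        have hden_ge : p ≤ den := by simp only [hden_def]; nlinarith
        have h2 : p^2 * (1 - x) / den ≤ p * (1 - x) := by
          rw [div_le_iff₀ hden]
          nlinarith
        have hρpow : 0 ≤ ρ ^ (k - 1) := pow_nonneg hρ_pos.le _
        have h3 : r ≤ q + p * ρ ^ (k - 1) := by nlinarith [hrsub, mul_le_mul_of_nonneg_left h1x_le hp.le]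
        rw [div_le_iff₀ hq]
        calc r ≤ q + p * ρ ^ (k-1) := h3
          _ = (1 + p / q * ρ ^ (k-1)) * q := by field_simp
      calc (r / q) ^ (k - 1) ≤ (1 + (p / q) * ρ ^ (k - 1)) ^ (k - 1) := by
            apply pow_le_pow_left₀ (by positivity) hub
        _ ≤ (Real.exp ((p / q) * ρ ^ (k - 1))) ^ (k - 1) := by
            apply pow_le_pow_left₀ (by positivity)
            linarith [Real.add_one_le_exp ((p / q) * ρ ^ (k - 1))]
        _ = Real.exp ((k - 1 : ℕ) * ((p / q) * ρ ^ (k - 1))) := by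
            rw [← Real.exp_nat_mul]
    -- end key
  -- now the squeeze
  have hub_tendsto : Tendsto (fun k : ℕ => Real.exp ((k - 1 : ℕ) * ((p / q) * ρ ^ (k - 1)))) atTop (nhds 1) := by
    have h1 : Tendsto (fun n : ℕ => (n : ℝ) * ρ ^ n) atTop (nhds 0) :=
      tendsto_self_mul_const_pow_of_lt_one hρ_pos.le hρ_lt1
    have h2 : Tendsto (fun n : ℕ => (n : ℝ) * ((p / q) * ρ ^ n)) atTop (nhds 0) := by
      have := h1.const_mul (p / q)
      simp only [mul_zero] at this
      convert this using 2 with n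
      ring
    have h3 : Tendsto (fun k : ℕ => k - 1) atTop atTop :=
      tendsto_sub_atTop_nat 1
    have h4 := (h2.comp h3)
    have h5 := (Real.continuous_exp.tendsto 0).comp h4
    simpa [Function.comp_def] using h5
  have hlb_tendsto : Tendsto (fun _ : ℕ => (1:ℝ)) atTop (nhds 1) := tendsto_const_nhds
  apply tendsto_of_tendsto_of_tendsto_of_le_of_le' hlb_tendsto hub_tendsto
  · filter_upwards [eventually_ge_atTop 3] with k hk
    exact (key k hk).1
  · filter_upwards [eventually_ge_atTop 3] with k hk
    exact (key k hk).2
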